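/- Let 𝓘 : 𝔖₂ → [0,∞) be a definition of energy (continuous, monotone, degree-2 homogeneous, SO₂-invariant, proper). Then there exists Q > 0 such that every 𝓘-minimal norm s (meaning 𝓘(s) ≤ 𝓘(s∘T) for all T ∈ SL(2,ℝ)) is Q-quasiconformal: s(v) ≤ Q·s(w) for all v, w on the Euclidean unit circle. -/

import Mathlib

open Matrix MeasureTheory Real

noncomputable section

/-- The Euclidean plane. -/
abbrev E2 := EuclideanSpace ℝ (Fin 2)

/-- `SL(2,ℝ)` as matrices of determinant one. -/
abbrev SL2 := Matrix.SpecialLinearGroup (Fin 2) ℝ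

/-- The seminorm `v ↦ s (M v)`, i.e. `s ∘ M`. -/
def compM (s : Seminorm ℝ E2) (M : Matrix (Fin 2) (Fin 2) ℝ) : Seminorm ℝ E2 :=
  s.comp (Matrix.toEuclideanLin M)

/-- A seminorm is a norm iff it is positive away from the origin. -/
def IsNorm (s : Seminorm ℝ E2) : Prop := ∀ v : E2, v ≠ 0 → 0 < s v

/-- Monotonicity of a functional on seminorms. -/
def Monot (J : Seminorm ℝ E2 → ℝ) : Prop := ∀ s s' : Seminorm ℝ E2, s' ≤ s → J s' ≤ J s

/-- Degree 2 homogeneity of a functional on seminorms. -/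
def Homog (J : Seminorm ℝ E2 → ℝ) : Prop :=
  ∀ (c : NNReal) (s : Seminorm ℝ E2), J (c • s) = (c : ℝ) ^ 2 * J s

/-- `SL₂`-invariance of a functional on seminorms. -/
def SL2inv (J : Seminorm ℝ E2 → ℝ) : Prop :=
  ∀ (s : Seminorm ℝ E2) (T : SL2), J (compM s (T : Matrix (Fin 2) (Fin 2) ℝ)) = J s

/-- The Reshetnyak energy `I²₊(s) = max_{v ∈ S¹} s(v)²`. -/
def Iplus (s : Seminorm ℝ E2) : ℝ := ⨆ v : Metric.sphere (0 : E2) 1, (s (v : E2)) ^ 2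

/-- The unit ball of a seminorm. -/
def unitBallS (s : Seminorm ℝ E2) : Set E2 := {v | s v ≤ 1}

/-- The ellipse `M(D̄)` is inscribed in the unit ball of `s`. -/
def ellipseIn (s : Seminorm ℝ E2) (M : Matrix (Fin 2) (Fin 2) ℝ) : Prop :=
  (Matrix.toEuclideanLin M) '' (Metric.closedBall 0 1) ⊆ unitBallS s

/-- The area of the largest ellipse inscribed in the unit ball of `s`
(the area of the Loewner ellipse); the ellipse `M(D̄)` has area `π |det M|`. -/
def LoewnerArea (s : Seminorm ℝ E2) : ℝ :=
  sSup {a : ℝ | ∃ M : Matrix (Fin 2) (Fin 2) ℝ, ellipseIn s M ∧ a = π * |M.det|}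

/-- The inscribed Riemannian (Ivanov) Jacobian `J^i(s) = π / |L|`. -/
def Ji (s : Seminorm ℝ E2) : ℝ := π / LoewnerArea s

/-- `s` is isotropic: some round disc `t·D̄` is inscribed in the unit ball of `s` and has at
least the area of every inscribed ellipse, i.e. the Loewner ellipse is a round disc. -/
def Isotropic (s : Seminorm ℝ E2) : Prop :=
  ∃ t : ℝ, 0 < t ∧ Metric.closedBall (0 : E2) t ⊆ unitBallS s ∧
    ∀ M : Matrix (Fin 2) (Fin 2) ℝ, ellipseIn s M → π * |M.det| ≤ π * t ^ 2

/-- A Jacobian (definition of area): monotone, degree-2 homogeneous, `SL₂`-invariant,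
normalized on the Euclidean norm. -/
def IsJacobian (J : Seminorm ℝ E2 → ℝ) : Prop :=
  (∀ s, 0 ≤ J s) ∧ Monot J ∧ Homog J ∧ SL2inv J ∧ J (normSeminorm ℝ E2) = 1

/-- Continuity with respect to the sup-metric `d(s,s') = max_{v ∈ S¹} |s v - s' v|`. -/
def ContinuousSN (I : Seminorm ℝ E2 → ℝ) : Prop :=
  ∀ s : Seminorm ℝ E2, ∀ ε > (0 : ℝ), ∃ δ > (0 : ℝ), ∀ s' : Seminorm ℝ E2,
    (∀ v : E2, ‖v‖ = 1 → |s' v - s v| ≤ δ) → |I s' - I s| ≤ ε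

/-- `SO₂`-invariance of a functional on seminorms. -/
def SO2inv (I : Seminorm ℝ E2 → ℝ) : Prop :=
  ∀ (s : Seminorm ℝ E2) (T : Matrix (Fin 2) (Fin 2) ℝ),
    T ∈ Matrix.orthogonalGroup (Fin 2) ℝ → T.det = 1 → I (compM s T) = I s

/-- Properness: the sublevel set `I⁻¹([0,1])` is (sequentially) compact with respect to the
sup-metric on the unit circle. -/
def ProperEnergy (I : Seminorm ℝ E2 → ℝ) : Prop :=
  ∀ f : ℕ → Seminorm ℝ E2, (∀ n, I (f n) ≤ 1) →
    ∃ (s : Seminorm ℝ E2) (φ : ℕ → ℕ), StrictMono φ ∧ I s ≤ 1 ∧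
      Filter.Tendsto (fun n => ⨆ v : Metric.sphere (0 : E2) 1, |f (φ n) (v : E2) - s (v : E2)|)
        Filter.atTop (nhds 0)

/-- A (conformally invariant) definition of energy. -/
def IsEnergy (I : Seminorm ℝ E2 → ℝ) : Prop :=
  (∀ s, 0 ≤ I s) ∧ ContinuousSN I ∧ Monot I ∧ Homog I ∧ SO2inv I ∧ ProperEnergy I


/-! ### Auxiliary lemmas -/

lemma e2_norm_sq {w : E2} (hw : ‖w‖ = 1) : (w 0)^2 + (w 1)^2 = 1 := by
  rw [EuclideanSpace.norm_eq, Fin.sum_univ_two] at hw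
  have := Real.sqrt_eq_one.mp hw
  simpa [Real.norm_eq_abs, sq_abs] using this

lemma coord_le (v : E2) (i : Fin 2) : |v i| ≤ ‖v‖ := by
  rw [EuclideanSpace.norm_eq]
  refine le_trans ?_ (Real.sqrt_le_sqrt (Finset.single_le_sum (f := fun j => ‖v j‖^2)
    (fun j _ => sq_nonneg _) (Finset.mem_univ i)))
  rw [Real.sqrt_sq (norm_nonneg _), Real.norm_eq_abs]

lemma e2_decomp (v : E2) :
    v = v 0 • EuclideanSpace.single (0 : Fin 2) (1:ℝ) + v 1 • EuclideanSpace.single (1 : Fin 2) (1:ℝ) := by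
  ext j
  fin_cases j <;> simp [EuclideanSpace.single_apply]

lemma seminorm_bd (s : Seminorm ℝ E2) : ∃ C, 0 ≤ C ∧ ∀ v : E2, s v ≤ C * ‖v‖ := by
  refine ⟨s (EuclideanSpace.single (0:Fin 2) (1:ℝ)) + s (EuclideanSpace.single (1:Fin 2) (1:ℝ)),
    add_nonneg (apply_nonneg s _) (apply_nonneg s _), fun v => ?_⟩
  calc s v = s (v 0 • EuclideanSpace.single (0 : Fin 2) (1:ℝ)
        + v 1 • EuclideanSpace.single (1 : Fin 2) (1:ℝ)) := by rw [← e2_decomp]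
    _ ≤ s (v 0 • EuclideanSpace.single (0 : Fin 2) (1:ℝ))
        + s (v 1 • EuclideanSpace.single (1 : Fin 2) (1:ℝ)) := map_add_le_add s _ _
    _ = |v 0| * s (EuclideanSpace.single (0:Fin 2) (1:ℝ))
        + |v 1| * s (EuclideanSpace.single (1:Fin 2) (1:ℝ)) := by
        rw [map_smul_eq_mul, map_smul_eq_mul, Real.norm_eq_abs, Real.norm_eq_abs]
    _ ≤ ‖v‖ * s (EuclideanSpace.single (0:Fin 2) (1:ℝ))
        + ‖v‖ * s (EuclideanSpace.single (1:Fin 2) (1:ℝ)) :=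
        add_le_add (mul_le_mul_of_nonneg_right (coord_le v 0) (apply_nonneg s _))
          (mul_le_mul_of_nonneg_right (coord_le v 1) (apply_nonneg s _))
    _ = _ := by ring

lemma shift_ker (s : Seminorm ℝ E2) {w : E2} (hw : s w = 0) (x : E2) (c : ℝ) :
    s (x + c • w) = s x := by
  have h1 : s (c • w) = 0 := by rw [map_smul_eq_mul, hw, mul_zero]
  refine le_antisymm (le_trans (map_add_le_add s _ _) (by rw [h1, add_zero])) ?_
  have heq : s ((x + c • w) + (-c) • w) = s x := by
    congr 1; module
  calc s x = s ((x + c • w) + (-c) • w) := heq.symm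
    _ ≤ s (x + c • w) + s ((-c) • w) := map_add_le_add s _ _
    _ = s (x + c • w) := by rw [map_smul_eq_mul, hw, mul_zero, add_zero]

lemma squeeze_sl2 (s : Seminorm ℝ E2) {w : E2} (hw : ‖w‖ = 1) (hker : s w = 0) :
    ∃ T : SL2, compM s (T : Matrix (Fin 2) (Fin 2) ℝ) = ((1/2 : NNReal)) • s := by
  set a := w 0 with ha
  set b := w 1 with hb
  have hab : a^2 + b^2 = 1 := e2_norm_sq hw
  set T : Matrix (Fin 2) (Fin 2) ℝ :=
    !![2*a^2 + b^2/2, (3/2)*a*b; (3/2)*a*b, 2*b^2 + a^2/2] with hT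
  have hdet : T.det = 1 := by
    rw [hT, Matrix.det_fin_two_of]; nlinarith [hab]
  set u : E2 := (WithLp.equiv 2 (Fin 2 → ℝ)).symm ![-b, a] with hu
  have key : ∀ v : E2, s (Matrix.toEuclideanLin T v) = (1/2) * s v := by
    intro v
    set α := a * v 0 + b * v 1 with hα
    set β := -b * v 0 + a * v 1 with hβ
    have hTv : Matrix.toEuclideanLin T v = (β/2) • u + (2*α) • w := by
      ext j
      fin_cases j <;>
        simp [Matrix.toEuclideanLin_apply, Matrix.mulVec, dotProduct,
          Fin.sum_univ_two, WithLp.equiv_symm_apply, WithLp.ofLp_toLp,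
          hu, hT, hα, hβ, PiLp.add_apply, PiLp.smul_apply, smul_eq_mul] <;> ring
    have hv : v = β • u + α • w := by
      ext j
      fin_cases j
      · simp [hu, hα, hβ, PiLp.add_apply, PiLp.smul_apply, smul_eq_mul,
          WithLp.equiv_symm_apply]
        linear_combination (-(v 0)) * hab
      · simp [hu, hα, hβ, PiLp.add_apply, PiLp.smul_apply, smul_eq_mul,
          WithLp.equiv_symm_apply]
        linear_combination (-(v 1)) * hab
    rw [hTv, shift_ker s hker _ _, map_smul_eq_mul]
    conv_rhs => rw [hv, shift_ker s hker _ _, map_smul_eq_mul]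
    rw [Real.norm_eq_abs, Real.norm_eq_abs, abs_div]
    simp; ring
  refine ⟨⟨T, hdet⟩, ?_⟩
  ext v
  rw [compM]
  simp only [Seminorm.comp_apply, Seminorm.smul_apply]
  rw [key v]
  simp [NNReal.smul_def]

lemma bddAbove_diff (p q : Seminorm ℝ E2) :
    BddAbove (Set.range fun v : Metric.sphere (0:E2) 1 => |p (v:E2) - q (v:E2)|) := by
  obtain ⟨C1, hC1, h1⟩ := seminorm_bd p
  obtain ⟨C2, hC2, h2⟩ := seminorm_bd q
  refine ⟨C1 + C2, ?_⟩
  rintro x ⟨v, rfl⟩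
  have hv : ‖(v:E2)‖ = 1 := by
    have := v.2; rwa [mem_sphere_zero_iff_norm] at this
  have e1 := h1 (v:E2)
  have e2 := h2 (v:E2)
  rw [hv, mul_one] at e1 e2
  have hp0 := apply_nonneg p (v:E2)
  have hq0 := apply_nonneg q (v:E2)
  rw [abs_le]
  constructor <;> linarith

lemma le_sup_diff (p q : Seminorm ℝ E2) {v : E2} (hv : ‖v‖ = 1) :
    |p v - q v| ≤ ⨆ v' : Metric.sphere (0:E2) 1, |p (v':E2) - q (v':E2)| :=
  le_ciSup (bddAbove_diff p q) (⟨v, by rwa [mem_sphere_zero_iff_norm]⟩ : Metric.sphere (0:E2) 1)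

lemma sup_diff_nonneg (p q : Seminorm ℝ E2) :
    0 ≤ ⨆ v' : Metric.sphere (0:E2) 1, |p (v':E2) - q (v':E2)| :=
  le_trans (abs_nonneg _) (le_sup_diff p q (v := EuclideanSpace.single (0:Fin 2) (1:ℝ))
    (by simp [EuclideanSpace.norm_single]))

lemma abs_diff_le (p q : Seminorm ℝ E2) (u : E2) :
    |p u - q u| ≤ ‖u‖ * (⨆ v' : Metric.sphere (0:E2) 1, |p (v':E2) - q (v':E2)|) := by
  rcases eq_or_ne u 0 with rfl | hu
  · simp only [map_zero, sub_zero, abs_zero, norm_zero, zero_mul]; exact le_refl _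
  · have hr : 0 < ‖u‖ := norm_pos_iff.mpr hu
    set x : E2 := ‖u‖⁻¹ • u with hx
    have hunit : ‖x‖ = 1 := by
      rw [hx, norm_smul, Real.norm_eq_abs, abs_inv, abs_of_pos hr, inv_mul_cancel₀ hr.ne']
    have hru : u = ‖u‖ • x := by
      rw [hx, smul_smul, mul_inv_cancel₀ hr.ne', one_smul]
    have hp : p u = ‖u‖ * p x := by
      conv_lhs => rw [hru]
      rw [map_smul_eq_mul, Real.norm_eq_abs, abs_of_pos hr]
    have hq : q u = ‖u‖ * q x := by
      conv_lhs => rw [hru]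
      rw [map_smul_eq_mul, Real.norm_eq_abs, abs_of_pos hr]
    calc |p u - q u| = ‖u‖ * |p x - q x| := by
          rw [hp, hq, ← mul_sub, abs_mul, abs_of_pos hr]
      _ ≤ _ := mul_le_mul_of_nonneg_left (le_sup_diff p q hunit) hr.le

lemma compM_smul (c : NNReal) (s : Seminorm ℝ E2) (M : Matrix (Fin 2) (Fin 2) ℝ) :
    compM (c • s) M = c • compM s M := by
  ext v
  simp [compM, Seminorm.comp_apply, Seminorm.smul_apply]

lemma seminorm_lipschitz (s : Seminorm ℝ E2) :
    ∃ C, 0 ≤ C ∧ ∀ x y : E2, |s x - s y| ≤ C * ‖x - y‖ := by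
  obtain ⟨C, hC, h⟩ := seminorm_bd s
  exact ⟨C, hC, fun x y => le_trans (by
    simpa [Real.norm_eq_abs] using s.norm_sub_map_le_sub x y) (h (x - y))⟩

lemma I_pos_of (I : Seminorm ℝ E2 → ℝ) (hpos : ∀ s, 0 ≤ I s) (hhom : Homog I)
    (hproper : ProperEnergy I) (s : Seminorm ℝ E2) {v : E2} (hv : ‖v‖ = 1) (hsv : 0 < s v) :
    0 < I s := by
  rcases (hpos s).lt_or_eq with h | h
  · exact h
  exfalso
  set f : ℕ → Seminorm ℝ E2 := fun n => (((n:ℝ)+1).toNNReal) • s with hfdef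
  have hIf : ∀ n, I (f n) ≤ 1 := by
    intro n
    simp only [hfdef]
    rw [hhom _ s, ← h, mul_zero]
    norm_num
  obtain ⟨t, φ, hφ, _, htend⟩ := hproper f hIf
  obtain ⟨B, hB⟩ := htend.bddAbove_range
  have happ : ∀ n, f n v = ((n:ℝ)+1) * s v := by
    intro n
    simp only [hfdef, Seminorm.smul_apply, NNReal.smul_def, smul_eq_mul,
      Real.coe_toNNReal _ (by positivity : (0:ℝ) ≤ (n:ℝ)+1)]
  have key : ∀ n : ℕ, ((φ n : ℝ) + 1) * s v - t v ≤ B := by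
    intro n
    have h1 := (abs_le.mp (le_sup_diff (f (φ n)) t hv)).2
    have h2 : (⨆ v' : Metric.sphere (0:E2) 1, |f (φ n) (v':E2) - t (v':E2)|) ≤ B :=
      hB (Set.mem_range_self n)
    rw [happ] at h1
    linarith
  obtain ⟨n, hn⟩ := exists_nat_gt ((B + t v) / (s v))
  have hφn : (n:ℝ) ≤ (φ n : ℝ) := Nat.cast_le.mpr hφ.le_apply
  have h3 := key n
  rw [div_lt_iff₀ hsv] at hn
  nlinarith [h3, hn, mul_le_mul_of_nonneg_right hφn hsv.le, hsv]

/-- There is `Q > 0` such that every `𝓘`-minimal norm is `Q`-quasiconformal. -/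
theorem stmt13 (I : Seminorm ℝ E2 → ℝ) (hI : IsEnergy I) :
    ∃ Q : ℝ, 0 < Q ∧ ∀ s : Seminorm ℝ E2, IsNorm s →
      (∀ T : SL2, I s ≤ I (compM s (T : Matrix (Fin 2) (Fin 2) ℝ))) →
      ∀ v w : E2, ‖v‖ = 1 → ‖w‖ = 1 → s v ≤ Q * s w := by
  obtain ⟨hIpos, hIcont, hImono, hIhom, hISO, hIproper⟩ := hI
  by_contra hcon
  push_neg at hcon
  have hcon' : ∀ n : ℕ, ∃ s : Seminorm ℝ E2, IsNorm s ∧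
      (∀ T : SL2, I s ≤ I (compM s (T : Matrix (Fin 2) (Fin 2) ℝ))) ∧
      ∃ v w : E2, ‖v‖ = 1 ∧ ‖w‖ = 1 ∧ ((n:ℝ)+1) * s w < s v := by
    intro n
    obtain ⟨s, h1, h2, v, w, h3, h4, h5⟩ := hcon ((n:ℝ)+1) (by positivity)
    exact ⟨s, h1, h2, v, w, h3, h4, h5⟩
  choose s0 hnorm hmin vv ww hv1 hw1 hlt using hcon'
  have hvne : ∀ n, vv n ≠ 0 := by
    intro n h
    have := hv1 n
    rw [h, norm_zero] at this
    norm_num at this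
  have hIs0 : ∀ n, 0 < I (s0 n) := fun n =>
    I_pos_of I hIpos hIhom hIproper (s0 n) (hv1 n) (hnorm n _ (hvne n))
  set c : ℕ → NNReal := fun n => ⟨Real.sqrt (I (s0 n))⁻¹, Real.sqrt_nonneg _⟩ with hc
  have hc2 : ∀ n, ((c n : ℝ))^2 = (I (s0 n))⁻¹ := fun n =>
    Real.sq_sqrt (inv_nonneg.mpr (hIs0 n).le)
  have hcpos : ∀ n, 0 < (c n : ℝ) := fun n => Real.sqrt_pos.mpr (inv_pos.mpr (hIs0 n))
  set f : ℕ → Seminorm ℝ E2 := fun n => c n • s0 n with hfdef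
  have hIf : ∀ n, I (f n) = 1 := by
    intro n
    simp only [hfdef]
    rw [hIhom (c n) (s0 n), hc2 n, inv_mul_cancel₀ (hIs0 n).ne']
  have hfmin : ∀ n (T : SL2), I (f n) ≤ I (compM (f n) (T : Matrix (Fin 2) (Fin 2) ℝ)) := by
    intro n T
    simp only [hfdef]
    rw [compM_smul, hIhom, hIhom]
    exact mul_le_mul_of_nonneg_left (hmin n T) (sq_nonneg _)
  have hfapp : ∀ n x, f n x = (c n : ℝ) * s0 n x := by
    intro n x
    simp only [hfdef, Seminorm.smul_apply, NNReal.smul_def, smul_eq_mul]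
  have hflt : ∀ n : ℕ, ((n:ℝ)+1) * f n (ww n) < f n (vv n) := by
    intro n
    rw [hfapp, hfapp,
      show ((n:ℝ)+1) * ((c n:ℝ) * s0 n (ww n)) = (c n:ℝ) * (((n:ℝ)+1) * s0 n (ww n)) by ring]
    exact mul_lt_mul_of_pos_left (hlt n) (hcpos n)
  obtain ⟨t, φ, hφ, hIt1, htend⟩ := hIproper f (fun n => (hIf n).le)
  have hDsmall : ∀ ε > (0:ℝ), ∃ N, ∀ n ≥ N,
      (⨆ v' : Metric.sphere (0:E2) 1, |f (φ n) (v':E2) - t (v':E2)|) ≤ ε := by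
    intro ε hε
    obtain ⟨N, hN⟩ := Metric.tendsto_atTop.mp htend ε hε
    refine ⟨N, fun n hn => ?_⟩
    have := hN n hn
    rw [Real.dist_eq, sub_zero, abs_of_nonneg (sup_diff_nonneg _ _)] at this
    exact this.le
  -- I t ≥ 1/2
  have hIt : 1/2 ≤ I t := by
    obtain ⟨δ, hδpos, hδ⟩ := hIcont t (1/2) (by norm_num)
    obtain ⟨N, hN⟩ := hDsmall δ hδpos
    have h1 : |I (f (φ N)) - I t| ≤ 1/2 :=
      hδ (f (φ N)) (fun v hv => le_trans (le_sup_diff _ _ hv) (hN N le_rfl))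
    rw [hIf] at h1
    have := abs_le.mp h1
    linarith [this.1]
  -- t is minimal
  have htmin : ∀ T : SL2, I t ≤ I (compM t (T : Matrix (Fin 2) (Fin 2) ℝ)) := by
    intro T
    by_contra hlt2
    push_neg at hlt2
    set ε := (I t - I (compM t (T : Matrix (Fin 2) (Fin 2) ℝ))) / 3 with hε
    have hεpos : 0 < ε := by rw [hε]; linarith
    obtain ⟨δ1, hδ1pos, hδ1⟩ := hIcont t ε hεpos
    obtain ⟨δ2, hδ2pos, hδ2⟩ := hIcont (compM t (T : Matrix (Fin 2) (Fin 2) ℝ)) ε hεpos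
    obtain ⟨C, hC0, hC⟩ := seminorm_bd
      ((normSeminorm ℝ E2).comp (Matrix.toEuclideanLin (T : Matrix (Fin 2) (Fin 2) ℝ)))
    have hC' : ∀ v : E2, ‖Matrix.toEuclideanLin (T : Matrix (Fin 2) (Fin 2) ℝ) v‖ ≤ C * ‖v‖ := by
      intro v
      have := hC v
      simpa [Seminorm.comp_apply] using this
    obtain ⟨N, hN⟩ := hDsmall (min δ1 (δ2 / (C+1))) (lt_min hδ1pos (by positivity))
    have hDN1 := le_trans (hN N le_rfl) (min_le_left _ _)
    have hDN2 := le_trans (hN N le_rfl) (min_le_right _ _)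
    have hDN0 : (0:ℝ) ≤ ⨆ v' : Metric.sphere (0:E2) 1, |f (φ N) (v':E2) - t (v':E2)| :=
      sup_diff_nonneg _ _
    have e1 : |I (f (φ N)) - I t| ≤ ε :=
      hδ1 (f (φ N)) (fun v hv => le_trans (le_sup_diff _ _ hv) hDN1)
    have e2 : |I (compM (f (φ N)) (T : Matrix (Fin 2) (Fin 2) ℝ))
        - I (compM t (T : Matrix (Fin 2) (Fin 2) ℝ))| ≤ ε := by
      apply hδ2
      intro v hv
      have h1 := abs_diff_le (f (φ N)) t
        (Matrix.toEuclideanLin (T : Matrix (Fin 2) (Fin 2) ℝ) v)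
      have hub : ‖Matrix.toEuclideanLin (T : Matrix (Fin 2) (Fin 2) ℝ) v‖ ≤ C := by
        have := hC' v
        rwa [hv, mul_one] at this
      have h2 := le_trans h1 (mul_le_mul_of_nonneg_right hub hDN0)
      have hfin : C * (⨆ v' : Metric.sphere (0:E2) 1, |f (φ N) (v':E2) - t (v':E2)|) ≤ δ2 := by
        calc C * (⨆ v' : Metric.sphere (0:E2) 1, |f (φ N) (v':E2) - t (v':E2)|)
            ≤ C * (δ2/(C+1)) := mul_le_mul_of_nonneg_left hDN2 hC0
          _ ≤ δ2 := by
              rw [mul_div_assoc']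
              rw [div_le_iff₀ (by positivity : (0:ℝ) < C+1)]
              nlinarith [hδ2pos]
      simpa [compM, Seminorm.comp_apply] using le_trans h2 hfin
    have e3 := hfmin (φ N) T
    rw [hIf] at e1 e3
    have a1 := abs_le.mp e1
    have a2 := abs_le.mp e2
    rw [hε] at *
    linarith [a1.1, a1.2, a2.1, a2.2, e3, hlt2]
  -- the limit kills some direction
  obtain ⟨Ct, hCt0, hCt⟩ := seminorm_bd t
  obtain ⟨B, hB⟩ := htend.bddAbove_range
  have hDB : ∀ n, (⨆ v' : Metric.sphere (0:E2) 1, |f (φ n) (v':E2) - t (v':E2)|) ≤ B :=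
    fun n => hB (Set.mem_range_self n)
  have hfv : ∀ n, f (φ n) (vv (φ n)) ≤ Ct + B := by
    intro n
    have h1 := (abs_le.mp (le_sup_diff (f (φ n)) t (hv1 (φ n)))).2
    have h2 : t (vv (φ n)) ≤ Ct := by
      have := hCt (vv (φ n)); rwa [hv1, mul_one] at this
    linarith [hDB n]
  have hfw : ∀ n, f (φ n) (ww (φ n)) ≤ (Ct + B) / ((φ n : ℝ)+1) := by
    intro n
    have h := hflt (φ n)
    have hpos : (0:ℝ) < (φ n : ℝ)+1 := by positivity
    rw [le_div_iff₀ hpos]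
    nlinarith [hfv n, h]
  have htw : ∀ n, t (ww (φ n)) ≤ (Ct + B) / ((φ n:ℝ)+1)
      + (⨆ v' : Metric.sphere (0:E2) 1, |f (φ n) (v':E2) - t (v':E2)|) := by
    intro n
    have h1 := (abs_le.mp (le_sup_diff (f (φ n)) t (hw1 (φ n)))).1
    linarith [hfw n]
  have hmem : ∀ n, ww (φ n) ∈ Metric.sphere (0:E2) 1 := fun n => by
    rw [mem_sphere_zero_iff_norm]; exact hw1 _
  obtain ⟨wstar, hwstarmem, ψ, hψ, hwtend⟩ := (isCompact_sphere (0:E2) 1).tendsto_subseq hmem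
  have hwstar : ‖wstar‖ = 1 := mem_sphere_zero_iff_norm.mp hwstarmem
  obtain ⟨Cl, hCl0, hCl⟩ := seminorm_lipschitz t
  have htcont : Continuous fun x : E2 => t x := by
    refine (LipschitzWith.of_dist_le_mul (K := Real.toNNReal Cl)
      (f := fun x : E2 => t x) ?_).continuous
    intro x y
    rw [Real.dist_eq, dist_eq_norm, Real.coe_toNNReal _ hCl0]
    exact hCl x y
  have lim1 : Filter.Tendsto (fun k => t (ww (φ (ψ k)))) Filter.atTop (nhds (t wstar)) :=
    (htcont.tendsto wstar).comp hwtend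
  have hnat : Filter.Tendsto (fun n : ℕ => (n:ℝ)+1) Filter.atTop Filter.atTop :=
    Filter.tendsto_atTop_add_const_right _ 1 tendsto_natCast_atTop_atTop
  have base : Filter.Tendsto (fun n : ℕ => (Ct + B) / ((n:ℝ)+1)) Filter.atTop (nhds 0) := by
    simpa [div_eq_mul_inv] using (hnat.inv_tendsto_atTop).const_mul (Ct + B)
  have l1 : Filter.Tendsto (fun k => (Ct + B) / ((φ (ψ k) : ℝ)+1)) Filter.atTop (nhds 0) :=
    base.comp ((hφ.comp hψ).tendsto_atTop)
  have l2 : Filter.Tendsto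
      (fun k => ⨆ v' : Metric.sphere (0:E2) 1, |f (φ (ψ k)) (v':E2) - t (v':E2)|)
      Filter.atTop (nhds 0) := htend.comp hψ.tendsto_atTop
  have lim2 : Filter.Tendsto (fun k => t (ww (φ (ψ k)))) Filter.atTop (nhds 0) := by
    refine squeeze_zero (fun k => apply_nonneg t _) (fun k => htw (ψ k)) ?_
    simpa using l1.add l2
  have htwstar : t wstar = 0 := tendsto_nhds_unique lim1 lim2
  obtain ⟨T, hT⟩ := squeeze_sl2 t hwstar htwstar
  have hfinal := htmin T
  rw [hT, hIhom] at hfinal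
  have hcoe : ((1/2 : NNReal) : ℝ) = 1/2 := by norm_num
  rw [hcoe] at hfinal
  linarith [hIt, hfinal]
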